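/- Let I ⊆ k[x₁,...,xₙ] be an ideal generated by homogeneous polynomials all of the same degree d ≥ 2, let m ≥ d, and let f be one of the homogeneous generators. For elements a₁,...,aₙ of k[t]/(t^{m+1}) each divisible by t, writing aᵢ = t·bᵢ, one has f(a₁,...,aₙ) = 0 in k[t]/(t^{m+1}) if and only if f(b₁,...,bₙ) lies in the ideal (t^{m+1-d}) of k[t]/(t^{m+1}). -/

import Mathlib

open MvPolynomial Polynomial

lemma aeval_mul_smul {k : Type*} [CommRing k] {R : Type*} [CommRing R] [Algebra k R]
    {n d : ℕ} {f : MvPolynomial (Fin n) k} (hf : f.IsHomogeneous d)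
    (c : R) (b : Fin n → R) :
    MvPolynomial.aeval (fun i => c * b i) f = c ^ d * MvPolynomial.aeval b f := by
  rw [MvPolynomial.aeval_def, MvPolynomial.aeval_def, MvPolynomial.eval₂_eq,
    MvPolynomial.eval₂_eq, Finset.mul_sum]
  apply Finset.sum_congr rfl
  intro x hx
  have hdeg : ∑ i ∈ x.support, x i = d := by
    have := hf (MvPolynomial.mem_support_iff.mp hx)
    simpa [Finsupp.weight_apply, Finsupp.sum] using this
  rw [← hdeg]
  simp only [mul_pow]
  rw [Finset.prod_mul_distrib, Finset.prod_pow_eq_pow_sum]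
  ring

theorem homogeneous_jet_substitution (k : Type*) [Field k] (n d m : ℕ)
    (hd : 2 ≤ d) (hm : d ≤ m)
    (f : MvPolynomial (Fin n) k) (hf : f.IsHomogeneous d)
    (a b : Fin n →
      Polynomial k ⧸ (Ideal.span {Polynomial.X ^ (m + 1)} : Ideal (Polynomial k)))
    (hab : ∀ i, a i = Ideal.Quotient.mk _ Polynomial.X * b i) :
    MvPolynomial.aeval a f = 0 ↔
      MvPolynomial.aeval b f ∈
        Ideal.span {Ideal.Quotient.mk (Ideal.span {Polynomial.X ^ (m + 1)})
          (Polynomial.X ^ (m + 1 - d))} := by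
  have ha : a = fun i => Ideal.Quotient.mk _ Polynomial.X * b i := funext hab
  rw [ha, aeval_mul_smul hf]
  have hsum : d + (m + 1 - d) = m + 1 := by omega
  set q : Polynomial k →+* _ := Ideal.Quotient.mk (Ideal.span {Polynomial.X ^ (m + 1)})
  constructor
  · intro h
    obtain ⟨p, hp⟩ := Ideal.Quotient.mk_surjective (MvPolynomial.aeval b f)
    rw [← hp, ← map_pow, ← map_mul, Ideal.Quotient.eq_zero_iff_mem,
      Ideal.mem_span_singleton] at h
    have hdvd : Polynomial.X ^ (m + 1 - d) ∣ p := by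
      obtain ⟨c, hc⟩ := h
      refine ⟨c, ?_⟩
      have hXd : (Polynomial.X : Polynomial k) ^ d ≠ 0 := pow_ne_zero _ Polynomial.X_ne_zero
      apply mul_left_cancel₀ hXd
      rw [← mul_assoc, ← pow_add, hsum]
      linear_combination hc
    rw [← hp, Ideal.mem_span_singleton]
    exact map_dvd q hdvd
  · intro h
    rw [Ideal.mem_span_singleton] at h
    obtain ⟨c, hc⟩ := h
    rw [hc, ← mul_assoc, ← map_pow, ← map_mul, ← pow_add, hsum]
    have : q (Polynomial.X ^ (m + 1)) = 0 := by
      rw [Ideal.Quotient.eq_zero_iff_mem]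
      exact Ideal.subset_span rfl
    rw [this, zero_mul]
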